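/- For every bounded linear operator A on a complex Hilbert space and every v ∈ [0,1], ω(A) ≤ (1/4)( ‖A‖^{2(1-v)} + ‖A‖^{2v} + sqrt( (‖A‖^{2(1-v)} − ‖A‖^{2v})^2 + 4 ‖ |A|^{1-v} |A*|^{v} ‖^2 ) ). -/

import Mathlib

variable {H : Type*} [NormedAddCommGroup H] [InnerProductSpace ℂ H] [CompleteSpace H]

/-- The numerical radius of a bounded linear operator. -/
noncomputable def numRadius (A : H →L[ℂ] H) : ℝ :=
  ⨆ x : {x : H // ‖x‖ = 1}, ‖(inner ℂ (A x) (x : H) : ℂ)‖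

/-- The absolute value |A| = (A*A)^(1/2). -/
noncomputable def absOp (A : H →L[ℂ] H) : H →L[ℂ] H :=
  CFC.sqrt (ContinuousLinearMap.adjoint A * A)

/-- Real powers of an operator via continuous functional calculus. -/
noncomputable def opRpow (T : H →L[ℂ] H) (r : ℝ) : H →L[ℂ] H :=
  cfc (fun t : ℝ => t ^ r) T

open ContinuousLinearMap in
private lemma aux_adjoint_mul_self_nonneg (A : H →L[ℂ] H) :
    (0 : H →L[ℂ] H) ≤ adjoint A * A := by
  rw [← star_eq_adjoint]; exact star_mul_self_nonneg A

open ContinuousLinearMap in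
private lemma aux_norm_adjoint_mul_self (A : H →L[ℂ] H) :
    ‖adjoint A * A‖ = ‖A‖ * ‖A‖ := by
  rw [← star_eq_adjoint]; exact CStarRing.norm_star_mul_self

/-- Weierstrass approximation, in the form we need. -/
private lemma aux_weierstrass {M δ : ℝ} (hδ : 0 < δ) (f : ℝ → ℝ) (hf : Continuous f) :
    ∃ p : Polynomial ℝ, ∀ t ∈ Set.Icc (-M) M, |f t - p.eval t| ≤ δ := by
  have h := polynomialFunctions_closure_eq_top (-M) M
  set K : Set ℝ := Set.Icc (-M) M with hK
  let F : C(K, ℝ) := ContinuousMap.restrict K ⟨f, hf⟩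
  have hF : F ∈ closure ((polynomialFunctions K) : Set C(K, ℝ)) := by
    rw [← Subalgebra.topologicalClosure_coe, h]
    simp
  obtain ⟨g, hg, hdist⟩ := Metric.mem_closure_iff.mp hF δ hδ
  rw [polynomialFunctions_coe] at hg
  obtain ⟨p, rfl⟩ := hg
  refine ⟨p, fun t ht => ?_⟩
  have h2 := ContinuousMap.dist_apply_le_dist (f := F)
    (g := Polynomial.toContinuousMapOnAlgHom K p) ⟨t, ht⟩
  have : dist (f t) (p.eval t) ≤ dist F (Polynomial.toContinuousMapOnAlgHom K p) := h2
  rw [Real.dist_eq] at this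
  exact this.trans hdist.le

open ContinuousLinearMap in
private lemma aux_comm_pow (A : H →L[ℂ] H) (n : ℕ) :
    A * (adjoint A * A) ^ n = (A * adjoint A) ^ n * A := by
  induction n with
  | zero => simp
  | succ n ih =>
    rw [pow_succ', pow_succ']
    calc A * ((adjoint A * A) * (adjoint A * A) ^ n)
        = (A * adjoint A) * (A * (adjoint A * A) ^ n) := by
          simp only [← mul_assoc]
      _ = (A * adjoint A) * ((A * adjoint A) ^ n * A) := by rw [ih]
      _ = (A * adjoint A) * (A * adjoint A) ^ n * A := by
          simp only [← mul_assoc]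

open ContinuousLinearMap in
private lemma aux_comm_poly (A : H →L[ℂ] H) (p : Polynomial ℝ) :
    A * Polynomial.aeval (adjoint A * A) p = Polynomial.aeval (A * adjoint A) p * A := by
  induction p using Polynomial.induction_on' with
  | add p q hp hq => rw [map_add, map_add, mul_add, add_mul, hp, hq]
  | monomial n c =>
    rw [Polynomial.aeval_monomial, Polynomial.aeval_monomial]
    rw [Algebra.algebraMap_eq_smul_one]
    simp only [smul_mul_assoc, one_mul, mul_smul_comm]
    rw [aux_comm_pow]

set_option maxHeartbeats 1000000 in
open ContinuousLinearMap in
private lemma aux_comm_cfc (A : H →L[ℂ] H) (f : ℝ → ℝ) (hf : Continuous f) :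
    A * cfc f (adjoint A * A) = cfc f (A * adjoint A) * A := by
  have hT : IsSelfAdjoint (adjoint A * A) := .of_nonneg (aux_adjoint_mul_self_nonneg A)
  have hC : IsSelfAdjoint (A * adjoint A) := by
    have := IsSelfAdjoint.of_nonneg (aux_adjoint_mul_self_nonneg (adjoint A))
    rwa [adjoint_adjoint] at this
  set M : ℝ := ‖A‖ * ‖A‖ with hM
  have hnormC : ‖A * adjoint A‖ = M := by
    have := aux_norm_adjoint_mul_self (adjoint A)
    rw [adjoint_adjoint] at this
    rw [this, ContinuousLinearMap.adjoint.norm_map]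
  have hone : ‖(1 : H →L[ℂ] H)‖ ≤ 1 := ContinuousLinearMap.norm_id_le
  have hspecT : spectrum ℝ (adjoint A * A) ⊆ Set.Icc (-M) M := by
    intro t ht
    have h1 := spectrum.norm_le_norm_mul_of_mem ht
    rw [aux_norm_adjoint_mul_self A] at h1
    have h2 : ‖t‖ ≤ M := h1.trans (by nlinarith [norm_nonneg A, norm_nonneg (1 : H →L[ℂ] H)])
    rw [Real.norm_eq_abs, abs_le] at h2
    exact h2
  have hspecC : spectrum ℝ (A * adjoint A) ⊆ Set.Icc (-M) M := by
    intro t ht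
    have h1 := spectrum.norm_le_norm_mul_of_mem ht
    rw [hnormC] at h1
    have h2 : ‖t‖ ≤ M := h1.trans (by nlinarith [norm_nonneg A, norm_nonneg (1 : H →L[ℂ] H), hM ▸ mul_nonneg (norm_nonneg A) (norm_nonneg A)])
    rw [Real.norm_eq_abs, abs_le] at h2
    exact h2
  -- it suffices to bound the norm of the difference by an arbitrary positive ε
  rw [← sub_eq_zero, ← norm_eq_zero]
  by_contra hne
  have hpos : 0 < ‖A * cfc f (adjoint A * A) - cfc f (A * adjoint A) * A‖ :=
    lt_of_le_of_ne (norm_nonneg _) (Ne.symm hne)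
  set N := ‖A * cfc f (adjoint A * A) - cfc f (A * adjoint A) * A‖ with hN
  have hA0 : 0 < ‖A‖ + 1 := by positivity
  have hδ : 0 < N / (2 * (‖A‖ + 1)) := by positivity
  obtain ⟨p, hp⟩ := aux_weierstrass (M := M) hδ f hf
  have hfp1 : ‖cfc f (adjoint A * A) - cfc (fun t => Polynomial.eval t p) (adjoint A * A)‖
      ≤ N / (2 * (‖A‖ + 1)) := by
    rw [← cfc_sub _ _ _ (hf.continuousOn) ((Polynomial.continuous p).continuousOn)]
    exact norm_cfc_le hδ.le fun t ht => by
      simpa [Real.norm_eq_abs] using hp t (hspecT ht)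
  have hfp2 : ‖cfc f (A * adjoint A) - cfc (fun t => Polynomial.eval t p) (A * adjoint A)‖
      ≤ N / (2 * (‖A‖ + 1)) := by
    rw [← cfc_sub _ _ _ (hf.continuousOn) ((Polynomial.continuous p).continuousOn)]
    exact norm_cfc_le hδ.le fun t ht => by
      simpa [Real.norm_eq_abs] using hp t (hspecC ht)
  have hpoly : A * cfc (fun t => Polynomial.eval t p) (adjoint A * A)
      = cfc (fun t => Polynomial.eval t p) (A * adjoint A) * A := by
    rw [cfc_polynomial p (adjoint A * A), cfc_polynomial p (A * adjoint A)]
    exact aux_comm_poly A p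
  have key : N ≤ N / (2 * (‖A‖ + 1)) * ‖A‖ + ‖A‖ * (N / (2 * (‖A‖ + 1))) := by
    calc N = ‖A * (cfc f (adjoint A * A) - cfc (fun t => Polynomial.eval t p) (adjoint A * A))
          + (-((cfc f (A * adjoint A) - cfc (fun t => Polynomial.eval t p) (A * adjoint A)) * A))
          + (A * cfc (fun t => Polynomial.eval t p) (adjoint A * A)
            - cfc (fun t => Polynomial.eval t p) (A * adjoint A) * A)‖ := by
          rw [hN]; congr 1; noncomm_ring
      _ ≤ ‖A * (cfc f (adjoint A * A) - cfc (fun t => Polynomial.eval t p) (adjoint A * A))‖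
          + ‖-((cfc f (A * adjoint A) - cfc (fun t => Polynomial.eval t p) (A * adjoint A)) * A)‖
          + ‖A * cfc (fun t => Polynomial.eval t p) (adjoint A * A)
            - cfc (fun t => Polynomial.eval t p) (A * adjoint A) * A‖ := norm_add₃_le
      _ ≤ ‖A‖ * (N / (2 * (‖A‖ + 1))) + N / (2 * (‖A‖ + 1)) * ‖A‖ + 0 := by
          rw [hpoly, sub_self, norm_zero]
          gcongr
          · exact (norm_mul_le _ _).trans (by gcongr)
          · rw [norm_neg]
            exact (norm_mul_le _ _).trans (by gcongr)
      _ = N / (2 * (‖A‖ + 1)) * ‖A‖ + ‖A‖ * (N / (2 * (‖A‖ + 1))) := by ring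
  have : N ≤ N * (‖A‖ / (‖A‖ + 1)) := by
    calc N ≤ _ := key
      _ = N * (‖A‖ / (‖A‖ + 1)) := by field_simp; ring
  have hx : ‖A‖ / (‖A‖ + 1) < 1 := (div_lt_one hA0).mpr (by linarith)
  nlinarith [mul_lt_mul_of_pos_left hx hpos]


set_option synthInstance.maxHeartbeats 2000000
set_option maxHeartbeats 2000000

private lemma aux_rpow_split (v : ℝ) (t : ℝ) :
    |t| ^ v * |t| ^ (1 - v) = |t| := by
  rcases eq_or_lt_of_le (abs_nonneg t) with h | h
  · rcases eq_or_ne v 0 with rfl | hv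
    · rw [← h, Real.rpow_zero, one_mul, sub_zero, Real.rpow_one]
    · rw [← h, Real.zero_rpow hv, zero_mul]
  · rw [← Real.rpow_add h, add_sub_cancel, Real.rpow_one]

private lemma aux_rpow_sq {c : ℝ} (hc : 0 ≤ c) (r : ℝ) : (c ^ r) ^ 2 = c ^ (2 * r) := by
  have h1 : ((2:ℕ):ℝ) = (2:ℝ) := by norm_num
  calc (c ^ r) ^ 2 = (c ^ r) ^ ((2:ℕ):ℝ) := (Real.rpow_natCast _ 2).symm
    _ = (c ^ r) ^ (2:ℝ) := by rw [h1]
    _ = c ^ (r * 2) := (Real.rpow_mul hc r 2).symm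
    _ = c ^ (2 * r) := by rw [mul_comm]

private lemma aux_le_of_sq_le_sq {x y : ℝ} (hy : 0 ≤ y) (h : x^2 ≤ y^2) (hx : 0 ≤ x) :
    x ≤ y := by
  by_contra hc
  push_neg at hc
  nlinarith

private lemma aux_quad {a b c s t : ℝ} (ha : 0 ≤ a) (hb : 0 ≤ b) (hc : 0 ≤ c)
    (hs : 0 ≤ s) (ht : 0 ≤ t) :
    a * s^2 + 2*c*s*t + b*t^2 ≤ ((a + b + Real.sqrt ((a-b)^2 + 4*c^2))/2) * (s^2 + t^2) := by
  set D := Real.sqrt ((a-b)^2 + 4*c^2) with hD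
  have hD0 : 0 ≤ D := Real.sqrt_nonneg _
  have hD2 : D^2 = (a-b)^2 + 4*c^2 := Real.sq_sqrt (by positivity)
  have habs : |a - b| ≤ D := by
    rw [hD, ← Real.sqrt_sq_eq_abs]
    exact Real.sqrt_le_sqrt (by nlinarith)
  have hp : 0 ≤ D - (a-b) := by linarith [(abs_le.mp habs).2]
  have hq : 0 ≤ D + (a-b) := by linarith [(abs_le.mp habs).1]
  have hpq : (D - (a-b)) * (D + (a-b)) = 4*c^2 := by linear_combination hD2
  have key : 4*c*s*t ≤ (D - (a-b)) * s^2 + (D + (a-b)) * t^2 := by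
    have h1 := sq_nonneg (Real.sqrt (D - (a-b)) * s - Real.sqrt (D + (a-b)) * t)
    have h2 : Real.sqrt (D - (a-b)) ^ 2 = D - (a-b) := Real.sq_sqrt hp
    have h3 : Real.sqrt (D + (a-b)) ^ 2 = D + (a-b) := Real.sq_sqrt hq
    have h4 : Real.sqrt (D - (a-b)) * Real.sqrt (D + (a-b)) = 2*c := by
      rw [← Real.sqrt_mul hp, hpq, show 4*c^2 = (2*c)^2 by ring, Real.sqrt_sq (by linarith)]
    have h5 : (Real.sqrt (D - (a-b)) * s - Real.sqrt (D + (a-b)) * t)^2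
        = Real.sqrt (D - (a-b))^2 * s^2 + Real.sqrt (D + (a-b))^2 * t^2
          - 2*(Real.sqrt (D - (a-b)) * Real.sqrt (D + (a-b)))*(s*t) := by ring
    rw [h2, h3, h4] at h5
    rw [h5] at h1
    linarith
  linarith

section OperatorFacts

open ContinuousLinearMap

private lemma aux_absOp_nonneg (A : H →L[ℂ] H) : (0 : H →L[ℂ] H) ≤ absOp A :=
  CFC.sqrt_nonneg _

private lemma aux_absOp_sa (A : H →L[ℂ] H) : IsSelfAdjoint (absOp A) :=
  .of_nonneg (aux_absOp_nonneg A)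

set_option synthInstance.maxHeartbeats 1000000 in
private lemma aux_absOp_mul_self (A : H →L[ℂ] H) : absOp A * absOp A = adjoint A * A :=
  CFC.sqrt_mul_sqrt_self _ (aux_adjoint_mul_self_nonneg A)

private lemma aux_norm_absOp (A : H →L[ℂ] H) : ‖absOp A‖ = ‖A‖ := by
  have h1 : ‖absOp A‖ * ‖absOp A‖ = ‖A‖ * ‖A‖ := by
    calc ‖absOp A‖ * ‖absOp A‖ = ‖star (absOp A) * absOp A‖ := CStarRing.norm_star_mul_self.symm
      _ = ‖adjoint A * A‖ := by rw [(aux_absOp_sa A).star_eq, aux_absOp_mul_self]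
      _ = ‖A‖ * ‖A‖ := aux_norm_adjoint_mul_self A
  have h2 := norm_nonneg (absOp A)
  have h3 := norm_nonneg A
  nlinarith [sq_nonneg (‖absOp A‖ - ‖A‖), sq_nonneg (‖absOp A‖ + ‖A‖)]

private lemma aux_spec_absOp (A : H →L[ℂ] H) :
    ∀ t ∈ spectrum ℝ (absOp A), 0 ≤ t ∧ t ≤ ‖A‖ := by
  intro t ht
  refine ⟨spectrum_nonneg_of_nonneg (aux_absOp_nonneg A) ht, ?_⟩
  have h1 := spectrum.norm_le_norm_mul_of_mem ht
  have hone : ‖(1 : H →L[ℂ] H)‖ ≤ 1 := ContinuousLinearMap.norm_id_le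
  rw [aux_norm_absOp] at h1
  calc t ≤ ‖t‖ := le_abs_self t
    _ ≤ ‖A‖ * ‖(1 : H →L[ℂ] H)‖ := h1
    _ ≤ ‖A‖ := mul_le_of_le_one_right (norm_nonneg A) hone

private lemma aux_norm_opRpow_le (A : H →L[ℂ] H) {r : ℝ} (hr : 0 ≤ r) :
    ‖opRpow (absOp A) r‖ ≤ ‖A‖ ^ r := by
  refine norm_cfc_le (Real.rpow_nonneg (norm_nonneg A) r) fun t ht => ?_
  obtain ⟨h0, h1⟩ := aux_spec_absOp A t ht
  rw [Real.norm_eq_abs, abs_of_nonneg (Real.rpow_nonneg h0 r)]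
  exact Real.rpow_le_rpow h0 h1 hr

private lemma aux_absOp_eq_cfc (A : H →L[ℂ] H) :
    absOp A = cfc Real.sqrt (adjoint A * A) := by
  rw [absOp, CFC.sqrt_eq_cfc, cfc_nnreal_eq_real _ _ (aux_adjoint_mul_self_nonneg A)]
  exact cfc_congr fun t _ => by rw [Real.sqrt]

private lemma aux_opRpow_abs (A : H →L[ℂ] H) (r : ℝ) :
    opRpow (absOp A) r = cfc (fun t : ℝ => |t| ^ r) (absOp A) := by
  refine cfc_congr fun t ht => ?_
  rw [abs_of_nonneg (spectrum_nonneg_of_nonneg (aux_absOp_nonneg A) ht)]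

end OperatorFacts

set_option maxHeartbeats 2000000 in
open ContinuousLinearMap in
/-- The generalized mixed Schwarz (Kato) inequality. -/
private lemma aux_kato (A : H →L[ℂ] H) {v : ℝ} (hv0 : 0 ≤ v) (hv1 : v ≤ 1)
    (x : H) (hx : ‖x‖ = 1) :
    ‖(inner ℂ (A x) x : ℂ)‖
      ≤ ‖opRpow (absOp A) (1-v) x‖ * ‖opRpow (absOp (adjoint A)) v x‖ := by
  have h1v : (0:ℝ) ≤ 1 - v := by linarith
  set B := absOp A with hBdef
  have hB0 : (0 : H →L[ℂ] H) ≤ B := aux_absOp_nonneg A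
  have hBsa : IsSelfAdjoint B := aux_absOp_sa A
  have hT0 : (0 : H →L[ℂ] H) ≤ adjoint A * A := aux_adjoint_mul_self_nonneg A
  have hTsa : IsSelfAdjoint (adjoint A * A) := .of_nonneg hT0
  have hC0 : (0 : H →L[ℂ] H) ≤ A * adjoint A := by
    have := aux_adjoint_mul_self_nonneg (adjoint A); rwa [adjoint_adjoint] at this
  have hCsa : IsSelfAdjoint (A * adjoint A) := .of_nonneg hC0
  have hBB : B * B = adjoint A * A := aux_absOp_mul_self A
  have hspecB : ∀ t ∈ spectrum ℝ B, 0 ≤ t := fun t ht => (aux_spec_absOp A t ht).1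
  have hspecC : ∀ s ∈ spectrum ℝ (A * adjoint A), 0 ≤ s :=
    fun s hs => spectrum_nonneg_of_nonneg hC0 hs
  have hqvc : Continuous (fun t : ℝ => |t| ^ v) :=
    continuous_abs.rpow_const (fun t => Or.inr hv0)
  have hpvc : Continuous (fun t : ℝ => |t| ^ (1-v)) :=
    continuous_abs.rpow_const (fun t => Or.inr h1v)
  -- identify the two operator powers as concrete cfc's
  have hPeq : opRpow B (1-v) = cfc (fun t : ℝ => |t| ^ (1-v)) B := aux_opRpow_abs A (1-v)
  have hQeq : opRpow (absOp (adjoint A)) v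
      = cfc ((fun t : ℝ => |t| ^ v) ∘ Real.sqrt) (A * adjoint A) := by
    rw [aux_opRpow_abs (adjoint A) v]
    have hB' : absOp (adjoint A) = cfc Real.sqrt (A * adjoint A) := by
      rw [aux_absOp_eq_cfc (adjoint A), adjoint_adjoint]
    rw [hB']
    exact (cfc_comp (fun t : ℝ => |t| ^ v) Real.sqrt (A * adjoint A) hCsa
      hqvc.continuousOn Real.continuous_sqrt.continuousOn).symm
  rw [hPeq, hQeq]
  apply le_of_forall_pos_le_add
  intro ε hε
  have hd : Continuous (fun t : ℝ => (|t| + ε)⁻¹) :=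
    (continuous_abs.add continuous_const).inv₀ (fun t => (by positivity : (0:ℝ) < |t| + ε).ne')
  have hg0 : Continuous (fun t : ℝ => (|t| + ε)⁻¹ * |t| ^ v) := hd.mul hqvc
  -- splitting of the identity
  have hone : cfc (fun t : ℝ => |t| * (|t| + ε)⁻¹) B
      + cfc (fun t : ℝ => ε * (|t| + ε)⁻¹) B = 1 := by
    rw [← cfc_add B (fun t : ℝ => |t| * (|t| + ε)⁻¹) (fun t : ℝ => ε * (|t| + ε)⁻¹) ((continuous_abs.mul hd).continuousOn)
      ((continuous_const.mul hd).continuousOn)]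
    have heq1 : (fun t : ℝ => |t| * (|t| + ε)⁻¹ + ε * (|t| + ε)⁻¹) = fun _ : ℝ => (1:ℝ) := by
      funext t
      have h0 : 0 < |t| + ε := by positivity
      field_simp
    rw [heq1, cfc_const_one ℝ B]
  have hsplit : (inner ℂ (A x) x : ℂ)
      = inner ℂ ((A * cfc (fun t : ℝ => |t| * (|t| + ε)⁻¹) B) x) x
        + inner ℂ ((A * cfc (fun t : ℝ => ε * (|t| + ε)⁻¹) B) x) x := by
    rw [← inner_add_left, ← ContinuousLinearMap.add_apply, ← mul_add, hone, mul_one]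
  -- ‖A z‖ = ‖B z‖
  have hAB : ∀ z : H, ‖A z‖ = ‖B z‖ := by
    intro z
    have e1 : (inner ℂ (A z) (A z) : ℂ) = inner ℂ ((adjoint A * A) z) z := by
      rw [ContinuousLinearMap.mul_apply, adjoint_inner_left]
    have e2 : (inner ℂ ((B * B) z) z : ℂ) = inner ℂ (B z) (B z) := by
      have e := adjoint_inner_left B z (B z)
      rw [hBsa.adjoint_eq] at e
      rw [ContinuousLinearMap.mul_apply, e]
    have e3 : (inner ℂ (A z) (A z) : ℂ) = inner ℂ (B z) (B z) := by rw [e1, ← hBB, e2]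
    have e4 : ‖A z‖^2 = ‖B z‖^2 := by
      rw [← inner_self_eq_norm_sq (𝕜 := ℂ), ← inner_self_eq_norm_sq (𝕜 := ℂ), e3]
    exact le_antisymm (aux_le_of_sq_le_sq (norm_nonneg _) e4.le (norm_nonneg _))
      (aux_le_of_sq_le_sq (norm_nonneg _) e4.ge (norm_nonneg _))
  -- error term bound
  have herr : ‖(inner ℂ ((A * cfc (fun t : ℝ => ε * (|t| + ε)⁻¹) B) x) x : ℂ)‖ ≤ ε := by
    have hBop : B * cfc (fun t : ℝ => ε * (|t| + ε)⁻¹) B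
        = cfc (fun t : ℝ => t * (ε * (|t| + ε)⁻¹)) B := by
      rw [cfc_mul (fun t : ℝ => t) (fun t : ℝ => ε * (|t| + ε)⁻¹) B
        continuous_id'.continuousOn ((continuous_const.mul hd).continuousOn), cfc_id' ℝ B hBsa]
    have hnorm : ‖B * cfc (fun t : ℝ => ε * (|t| + ε)⁻¹) B‖ ≤ ε := by
      rw [hBop]
      refine norm_cfc_le hε.le fun t ht => ?_
      have ht0 := hspecB t ht
      have h6 : t * (|t| + ε)⁻¹ ≤ 1 := by
        rw [← div_eq_mul_inv]
        exact (div_le_one (by positivity)).mpr (by rw [abs_of_nonneg ht0]; linarith)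
      have h7 : 0 ≤ t * (ε * (|t| + ε)⁻¹) := mul_nonneg ht0 (by positivity)
      rw [Real.norm_eq_abs, abs_of_nonneg h7]
      calc t * (ε * (|t| + ε)⁻¹) = (t * (|t| + ε)⁻¹) * ε := by ring
        _ ≤ 1 * ε := mul_le_mul_of_nonneg_right h6 hε.le
        _ = ε := one_mul ε
    calc ‖(inner ℂ ((A * cfc (fun t : ℝ => ε * (|t| + ε)⁻¹) B) x) x : ℂ)‖
        ≤ ‖(A * cfc (fun t : ℝ => ε * (|t| + ε)⁻¹) B) x‖ * ‖x‖ := norm_inner_le_norm _ _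
      _ = ‖A (cfc (fun t : ℝ => ε * (|t| + ε)⁻¹) B x)‖ := by
          rw [hx, mul_one, ContinuousLinearMap.mul_apply]
      _ = ‖B (cfc (fun t : ℝ => ε * (|t| + ε)⁻¹) B x)‖ := hAB _
      _ = ‖(B * cfc (fun t : ℝ => ε * (|t| + ε)⁻¹) B) x‖ := by
          rw [ContinuousLinearMap.mul_apply]
      _ ≤ ‖B * cfc (fun t : ℝ => ε * (|t| + ε)⁻¹) B‖ * ‖x‖ :=
          ContinuousLinearMap.le_opNorm _ _
      _ ≤ ε := by rw [hx, mul_one]; exact hnorm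
  -- factor the main term
  have hmain : A * cfc (fun t : ℝ => |t| * (|t| + ε)⁻¹) B
      = (A * cfc (fun t : ℝ => (|t| + ε)⁻¹ * |t| ^ v) B) * cfc (fun t : ℝ => |t| ^ (1-v)) B := by
    have hfact : (fun t : ℝ => |t| * (|t| + ε)⁻¹)
        = fun t : ℝ => ((|t| + ε)⁻¹ * |t| ^ v) * (|t| ^ (1-v)) := by
      funext t
      rw [mul_assoc, aux_rpow_split v t]
      ring
    rw [hfact, cfc_mul _ _ B hg0.continuousOn hpvc.continuousOn, ← mul_assoc]
  set S := A * cfc (fun t : ℝ => (|t| + ε)⁻¹ * |t| ^ v) B with hSdef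
  -- compute S * adjoint S
  have hadjS : adjoint S = cfc (fun t : ℝ => (|t| + ε)⁻¹ * |t| ^ v) B * adjoint A := by
    rw [hSdef, ← star_eq_adjoint, star_mul,
      (cfc_predicate (fun t : ℝ => (|t| + ε)⁻¹ * |t| ^ v) B).star_eq, star_eq_adjoint]
  have hSS1 : S * adjoint S
      = A * (cfc (fun t : ℝ => ((|t| + ε)⁻¹ * |t| ^ v) * ((|t| + ε)⁻¹ * |t| ^ v)) B
          * adjoint A) := by
    rw [hadjS, hSdef, cfc_mul _ _ B hg0.continuousOn hg0.continuousOn]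
    simp only [mul_assoc]
  have hBcfc : B = cfc Real.sqrt (adjoint A * A) := aux_absOp_eq_cfc A
  have hcomp : cfc (fun t : ℝ => ((|t| + ε)⁻¹ * |t| ^ v) * ((|t| + ε)⁻¹ * |t| ^ v)) B
      = cfc ((fun t : ℝ => ((|t| + ε)⁻¹ * |t| ^ v) * ((|t| + ε)⁻¹ * |t| ^ v)) ∘ Real.sqrt)
          (adjoint A * A) := by
    rw [hBcfc]
    exact (cfc_comp (fun t : ℝ => ((|t| + ε)⁻¹ * |t| ^ v) * ((|t| + ε)⁻¹ * |t| ^ v)) Real.sqrt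
      (adjoint A * A) hTsa (hg0.mul hg0).continuousOn Real.continuous_sqrt.continuousOn).symm
  have hGc : Continuous ((fun t : ℝ => ((|t| + ε)⁻¹ * |t| ^ v) * ((|t| + ε)⁻¹ * |t| ^ v))
      ∘ Real.sqrt) := (hg0.mul hg0).comp Real.continuous_sqrt
  have hSS2 : S * adjoint S
      = cfc (fun s : ℝ => (((fun t : ℝ => ((|t| + ε)⁻¹ * |t| ^ v) * ((|t| + ε)⁻¹ * |t| ^ v))
          ∘ Real.sqrt) s) * s) (A * adjoint A) := by
    rw [hSS1, hcomp, ← mul_assoc, aux_comm_cfc A _ hGc, mul_assoc]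
    have hmm := cfc_mul ((fun t : ℝ => ((|t| + ε)⁻¹ * |t| ^ v) * ((|t| + ε)⁻¹ * |t| ^ v))
        ∘ Real.sqrt) (fun s : ℝ => s) (A * adjoint A) hGc.continuousOn
        continuous_id'.continuousOn
    rw [cfc_id' ℝ (A * adjoint A) hCsa] at hmm
    exact hmm.symm
  -- pointwise comparison
  have hq2 : cfc (fun s : ℝ => (((fun t : ℝ => ((|t| + ε)⁻¹ * |t| ^ v) * ((|t| + ε)⁻¹ * |t| ^ v))
          ∘ Real.sqrt) s) * s) (A * adjoint A)
      ≤ cfc (fun s : ℝ => (((fun t : ℝ => |t| ^ v) ∘ Real.sqrt) s)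
          * (((fun t : ℝ => |t| ^ v) ∘ Real.sqrt) s)) (A * adjoint A) := by
    have hkc : Continuous (fun s : ℝ =>
        (((fun t : ℝ => ((|t| + ε)⁻¹ * |t| ^ v) * ((|t| + ε)⁻¹ * |t| ^ v)) ∘ Real.sqrt) s) * s) :=
      hGc.mul continuous_id'
    have hqsc : Continuous (fun s : ℝ => (((fun t : ℝ => |t| ^ v) ∘ Real.sqrt) s)
        * (((fun t : ℝ => |t| ^ v) ∘ Real.sqrt) s)) :=
      (hqvc.comp Real.continuous_sqrt).mul (hqvc.comp Real.continuous_sqrt)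
    refine cfc_mono ?_ hkc.continuousOn hqsc.continuousOn
    intro s hs
    have hs0 := hspecC s hs
    simp only [Function.comp_apply]
    have hr0 : 0 ≤ Real.sqrt s := Real.sqrt_nonneg s
    set r := Real.sqrt s with hr
    have hr2 : r^2 = s := Real.sq_sqrt hs0
    have habsr : |r| = r := abs_of_nonneg hr0
    rw [habsr, ← hr2]
    have h7 : 0 ≤ (r + ε)⁻¹ := by positivity
    have h6 : (r + ε)⁻¹ * r ≤ 1 := by
      rw [mul_comm, ← div_eq_mul_inv]
      exact (div_le_one (by positivity)).mpr (by linarith)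
    have h8 : 0 ≤ r ^ v := Real.rpow_nonneg hr0 v
    have h9 : ((r + ε)⁻¹ * r) * ((r + ε)⁻¹ * r) ≤ 1 := by
      nlinarith [mul_nonneg h7 hr0]
    calc ((r + ε)⁻¹ * r ^ v) * ((r + ε)⁻¹ * r ^ v) * r^2
        = (r ^ v * r ^ v) * (((r + ε)⁻¹ * r) * ((r + ε)⁻¹ * r)) := by ring
      _ ≤ (r ^ v * r ^ v) * 1 := mul_le_mul_of_nonneg_left h9 (mul_nonneg h8 h8)
      _ = r ^ v * r ^ v := mul_one _
  -- turn the operator inequality into an inner-product inequality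
  have hcmp : RCLike.re (inner ℂ x ((S * adjoint S) x) : ℂ)
      ≤ RCLike.re (inner ℂ x
        ((cfc (fun s : ℝ => (((fun t : ℝ => |t| ^ v) ∘ Real.sqrt) s)
          * (((fun t : ℝ => |t| ^ v) ∘ Real.sqrt) s)) (A * adjoint A)) x) : ℂ) := by
    rw [hSS2]
    have hposd := ((ContinuousLinearMap.le_def _ _).mp hq2).inner_nonneg_right x
    simp only [ContinuousLinearMap.reApplyInnerSelf, ContinuousLinearMap.sub_apply,
      inner_sub_right, inner_sub_left, map_sub] at hposd ⊢
    have h := ((RCLike.nonneg_iff (K := ℂ)).mp hposd).1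
    rw [map_sub] at h
    linarith [h]
  -- the right-hand side is ‖Q x‖²
  set Qc := cfc ((fun t : ℝ => |t| ^ v) ∘ Real.sqrt) (A * adjoint A) with hQc
  have hQcsa : IsSelfAdjoint Qc := cfc_predicate _ _
  have hQQ : cfc (fun s : ℝ => (((fun t : ℝ => |t| ^ v) ∘ Real.sqrt) s)
      * (((fun t : ℝ => |t| ^ v) ∘ Real.sqrt) s)) (A * adjoint A) = Qc * Qc :=
    cfc_mul _ _ _ (hqvc.comp Real.continuous_sqrt).continuousOn
      (hqvc.comp Real.continuous_sqrt).continuousOn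
  have hQnorm : RCLike.re (inner ℂ x ((Qc * Qc) x) : ℂ) = ‖Qc x‖^2 := by
    have e := adjoint_inner_right Qc x (Qc x)
    rw [hQcsa.adjoint_eq] at e
    rw [ContinuousLinearMap.mul_apply, e, inner_self_eq_norm_sq (𝕜 := ℂ)]
  -- ‖adjoint S x‖ ≤ ‖Qc x‖
  have hadjnorm : ‖adjoint S x‖^2 = RCLike.re (inner ℂ x ((S * adjoint S) x) : ℂ) := by
    have e := adjoint_inner_left S (adjoint S x) x
    rw [ContinuousLinearMap.mul_apply, ← e]
    exact (inner_self_eq_norm_sq (𝕜 := ℂ) _).symm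
  have hSle : ‖adjoint S x‖ ≤ ‖Qc x‖ := by
    apply aux_le_of_sq_le_sq (norm_nonneg _) _ (norm_nonneg _)
    rw [hadjnorm, ← hQnorm, ← hQQ]
    exact hcmp
  -- main term bound
  have hmainbound : ‖(inner ℂ ((A * cfc (fun t : ℝ => |t| * (|t| + ε)⁻¹) B) x) x : ℂ)‖
      ≤ ‖cfc (fun t : ℝ => |t| ^ (1-v)) B x‖ * ‖Qc x‖ := by
    rw [hmain]
    have e5 : (inner ℂ ((S * cfc (fun t : ℝ => |t| ^ (1-v)) B) x) x : ℂ)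
        = inner ℂ (cfc (fun t : ℝ => |t| ^ (1-v)) B x) (adjoint S x) := by
      rw [ContinuousLinearMap.mul_apply]
      exact (adjoint_inner_right S _ x).symm
    rw [e5]
    calc ‖(inner ℂ (cfc (fun t : ℝ => |t| ^ (1-v)) B x) (adjoint S x) : ℂ)‖
        ≤ ‖cfc (fun t : ℝ => |t| ^ (1-v)) B x‖ * ‖adjoint S x‖ := norm_inner_le_norm _ _
      _ ≤ ‖cfc (fun t : ℝ => |t| ^ (1-v)) B x‖ * ‖Qc x‖ :=
          mul_le_mul_of_nonneg_left hSle (norm_nonneg _)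
  calc ‖(inner ℂ (A x) x : ℂ)‖
      = ‖(inner ℂ ((A * cfc (fun t : ℝ => |t| * (|t| + ε)⁻¹) B) x) x : ℂ)
          + (inner ℂ ((A * cfc (fun t : ℝ => ε * (|t| + ε)⁻¹) B) x) x : ℂ)‖ := by rw [← hsplit]
    _ ≤ ‖(inner ℂ ((A * cfc (fun t : ℝ => |t| * (|t| + ε)⁻¹) B) x) x : ℂ)‖
        + ‖(inner ℂ ((A * cfc (fun t : ℝ => ε * (|t| + ε)⁻¹) B) x) x : ℂ)‖ := norm_add_le _ _
    _ ≤ ‖cfc (fun t : ℝ => |t| ^ (1-v)) B x‖ * ‖Qc x‖ + ε := add_le_add hmainbound herr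

theorem stmt2 (A : H →L[ℂ] H) (v : ℝ) (hv : v ∈ Set.Icc (0:ℝ) 1) :
    numRadius A ≤ (1/4) * (‖A‖ ^ (2*(1-v)) + ‖A‖ ^ (2*v) +
      Real.sqrt ((‖A‖ ^ (2*(1-v)) - ‖A‖ ^ (2*v))^2 +
        4 * ‖opRpow (absOp A) (1-v) * opRpow (absOp (ContinuousLinearMap.adjoint A)) v‖^2)) := by
  obtain ⟨hv0, hv1⟩ := hv
  have h1v : (0:ℝ) ≤ 1 - v := by linarith
  set P := opRpow (absOp A) (1-v) with hP
  set Q := opRpow (absOp (ContinuousLinearMap.adjoint A)) v with hQ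
  set a := ‖A‖ ^ (2*(1-v)) with ha
  set b := ‖A‖ ^ (2*v) with hb
  set γ := ‖P * Q‖ with hγ
  have ha0 : 0 ≤ a := Real.rpow_nonneg (norm_nonneg A) _
  have hb0 : 0 ≤ b := Real.rpow_nonneg (norm_nonneg A) _
  have hγ0 : 0 ≤ γ := norm_nonneg _
  have hD0 : 0 ≤ Real.sqrt ((a-b)^2 + 4*γ^2) := Real.sqrt_nonneg _
  unfold numRadius
  apply Real.iSup_le _ (by linarith)
  rintro ⟨x, hx⟩
  show ‖(inner ℂ (A x) x : ℂ)‖ ≤ (1/4) * (a + b + Real.sqrt ((a-b)^2 + 4*γ^2))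
  have hPsa : IsSelfAdjoint P := by rw [hP, opRpow]; exact cfc_predicate _ _
  have hQsa : IsSelfAdjoint Q := by rw [hQ, opRpow]; exact cfc_predicate _ _
  have hPn : ‖P‖ ≤ ‖A‖ ^ (1-v) := aux_norm_opRpow_le A h1v
  have hQn : ‖Q‖ ≤ ‖A‖ ^ v := by
    have h := aux_norm_opRpow_le (ContinuousLinearMap.adjoint A) hv0
    rwa [ContinuousLinearMap.adjoint.norm_map] at h
  have hkato := aux_kato A hv0 hv1 x hx
  have hm0 : (0:ℝ) ≤ ‖P x‖^2 + ‖Q x‖^2 := by positivity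
  have e1 : ‖P x‖^2 = RCLike.re (inner ℂ x (P (P x)) : ℂ) := by
    have e := ContinuousLinearMap.adjoint_inner_right P x (P x)
    rw [hPsa.adjoint_eq] at e
    rw [e, inner_self_eq_norm_sq (𝕜 := ℂ)]
  have e2 : ‖Q x‖^2 = RCLike.re (inner ℂ x (Q (Q x)) : ℂ) := by
    have e := ContinuousLinearMap.adjoint_inner_right Q x (Q x)
    rw [hQsa.adjoint_eq] at e
    rw [e, inner_self_eq_norm_sq (𝕜 := ℂ)]
  have e4 : ‖P x‖^2 + ‖Q x‖^2 ≤ ‖P (P x) + Q (Q x)‖ := by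
    have e3 : ‖P x‖^2 + ‖Q x‖^2 = RCLike.re (inner ℂ x (P (P x) + Q (Q x)) : ℂ) := by
      rw [inner_add_right, map_add, e1, e2]
    rw [e3]
    calc RCLike.re (inner ℂ x (P (P x) + Q (Q x)) : ℂ)
        ≤ ‖(inner ℂ x (P (P x) + Q (Q x)) : ℂ)‖ := RCLike.re_le_norm _
      _ ≤ ‖x‖ * ‖P (P x) + Q (Q x)‖ := norm_inner_le_norm _ _
      _ = ‖P (P x) + Q (Q x)‖ := by rw [hx, one_mul]
  have e5 : ‖P (P x) + Q (Q x)‖^2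
      ≤ a * ‖P x‖^2 + 2*γ*(‖P x‖*‖Q x‖) + b * ‖Q x‖^2 := by
    have hexp : ‖P (P x) + Q (Q x)‖^2
        = ‖P (P x)‖^2 + 2 * RCLike.re (inner ℂ (P (P x)) (Q (Q x)) : ℂ) + ‖Q (Q x)‖^2 :=
      norm_add_sq (𝕜 := ℂ) _ _
    have hPP : ‖P (P x)‖ ≤ ‖A‖^(1-v) * ‖P x‖ :=
      (P.le_opNorm (P x)).trans (mul_le_mul_of_nonneg_right hPn (norm_nonneg _))
    have hQQ : ‖Q (Q x)‖ ≤ ‖A‖^v * ‖Q x‖ :=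
      (Q.le_opNorm (Q x)).trans (mul_le_mul_of_nonneg_right hQn (norm_nonneg _))
    have h1 : ‖P (P x)‖^2 ≤ a * ‖P x‖^2 := by
      calc ‖P (P x)‖^2 ≤ (‖A‖^(1-v) * ‖P x‖)^2 :=
            pow_le_pow_left₀ (norm_nonneg _) hPP 2
        _ = (‖A‖^(1-v))^2 * ‖P x‖^2 := by ring
        _ = a * ‖P x‖^2 := by rw [aux_rpow_sq (norm_nonneg A) (1-v), ← ha]
    have h2 : ‖Q (Q x)‖^2 ≤ b * ‖Q x‖^2 := by
      calc ‖Q (Q x)‖^2 ≤ (‖A‖^v * ‖Q x‖)^2 :=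
            pow_le_pow_left₀ (norm_nonneg _) hQQ 2
        _ = (‖A‖^v)^2 * ‖Q x‖^2 := by ring
        _ = b * ‖Q x‖^2 := by rw [aux_rpow_sq (norm_nonneg A) v, ← hb]
    have hcross : RCLike.re (inner ℂ (P (P x)) (Q (Q x)) : ℂ) ≤ γ * (‖P x‖ * ‖Q x‖) := by
      have e := ContinuousLinearMap.adjoint_inner_left P (Q (Q x)) (P x)
      rw [hPsa.adjoint_eq] at e
      calc RCLike.re (inner ℂ (P (P x)) (Q (Q x)) : ℂ)
          = RCLike.re (inner ℂ (P x) (P (Q (Q x))) : ℂ) := by rw [e]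
        _ ≤ ‖(inner ℂ (P x) (P (Q (Q x))) : ℂ)‖ := RCLike.re_le_norm _
        _ ≤ ‖P x‖ * ‖P (Q (Q x))‖ := norm_inner_le_norm _ _
        _ = ‖P x‖ * ‖(P * Q) (Q x)‖ := by rw [ContinuousLinearMap.mul_apply]
        _ ≤ ‖P x‖ * (γ * ‖Q x‖) :=
            mul_le_mul_of_nonneg_left ((P * Q).le_opNorm (Q x)) (norm_nonneg _)
        _ = γ * (‖P x‖ * ‖Q x‖) := by ring
    rw [hexp]
    linarith
  have e6 : a * ‖P x‖^2 + 2*γ*(‖P x‖*‖Q x‖) + b * ‖Q x‖^2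
      ≤ ((a + b + Real.sqrt ((a-b)^2 + 4*γ^2))/2) * (‖P x‖^2 + ‖Q x‖^2) := by
    have h := aux_quad ha0 hb0 hγ0 (norm_nonneg (P x)) (norm_nonneg (Q x))
    linarith
  have e7 : ‖P x‖^2 + ‖Q x‖^2 ≤ (a + b + Real.sqrt ((a-b)^2 + 4*γ^2))/2 := by
    rcases eq_or_lt_of_le hm0 with h | h
    · rw [← h]; linarith
    · have h8 : (‖P x‖^2 + ‖Q x‖^2) * (‖P x‖^2 + ‖Q x‖^2)
          ≤ ((a + b + Real.sqrt ((a-b)^2 + 4*γ^2))/2) * (‖P x‖^2 + ‖Q x‖^2) := by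
        nlinarith [pow_le_pow_left₀ hm0 e4 2, e5, e6]
      exact le_of_mul_le_mul_right h8 h
  calc ‖(inner ℂ (A x) x : ℂ)‖ ≤ ‖P x‖ * ‖Q x‖ := hkato
    _ ≤ (‖P x‖^2 + ‖Q x‖^2)/2 := by nlinarith [sq_nonneg (‖P x‖ - ‖Q x‖)]
    _ ≤ ((a + b + Real.sqrt ((a-b)^2 + 4*γ^2))/2)/2 := by linarith
    _ = (1/4) * (a + b + Real.sqrt ((a-b)^2 + 4*γ^2)) := by ring
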